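/- Let u, v, u', v' be nonzero complex numbers. Then u^m v^n + u^{-m} v^{-n} = u'^m v'^n + u'^{-m} v'^{-n} holds for all integers m, n if and only if (u', v') = (u, v) or (u', v') = (u^{-1}, v^{-1}). -/

import Mathlib

lemma aux_trace (a b : ℂ) (ha : a ≠ 0) (hb : b ≠ 0)
    (h : a + a⁻¹ = b + b⁻¹) : b = a ∨ b = a⁻¹ := by
  have key : (a - b) * (a * b - 1) = 0 := by
    have e : (a - b) * (a * b - 1) = (a * b) * ((a + a⁻¹) - (b + b⁻¹)) := by
      field_simp; ring
    rw [e, h, sub_self, mul_zero]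
  rcases mul_eq_zero.mp key with h3 | h3
  · exact Or.inl (sub_eq_zero.mp h3).symm
  · exact Or.inr (eq_inv_of_mul_eq_one_left (by linear_combination h3))

/-- Two diagonal representations of `ℤ × ℤ` have the same character
`(m, n) ↦ u^m v^n + u^{-m} v^{-n}` if and only if the eigenvalue pairs agree or are
simultaneously inverted. -/
theorem diagonal_characters_eq_iff
    (u v u' v' : ℂ) (hu : u ≠ 0) (hv : v ≠ 0) (hu' : u' ≠ 0) (hv' : v' ≠ 0) :
    (∀ m n : ℤ, u ^ m * v ^ n + u ^ (-m) * v ^ (-n)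
        = u' ^ m * v' ^ n + u' ^ (-m) * v' ^ (-n))
      ↔ ((u', v') = (u, v) ∨ (u', v') = (u⁻¹, v⁻¹)) := by
  constructor
  · intro h
    have h10 := h 1 0
    have h01 := h 0 1
    have h11 := h 1 1
    simp only [zpow_one, zpow_zero, zpow_neg, inv_one, one_mul, mul_one] at h10 h01 h11
    have hu2 : u' = u ∨ u' = u⁻¹ := aux_trace u u' hu hu' h10
    have hv2 : v' = v ∨ v' = v⁻¹ := aux_trace v v' hv hv' h01
    have huv : u' * v' = u * v ∨ u' * v' = (u * v)⁻¹ := by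
      apply aux_trace (u * v) (u' * v') (mul_ne_zero hu hv) (mul_ne_zero hu' hv')
      rw [mul_inv, mul_inv]; exact h11
    rcases hu2 with hu2 | hu2 <;> rcases hv2 with hv2 | hv2
    · left; rw [hu2, hv2]
    · -- u' = u, v' = v⁻¹
      rcases huv with h3 | h3
      · have hvv : v = v⁻¹ := by
          rw [hu2, hv2] at h3
          field_simp at h3
          have := mul_left_cancel₀ hu (show u * (v * v) = u * 1 by linear_combination (-u) * h3)
          exact eq_inv_of_mul_eq_one_left (by linear_combination this)
        left; rw [hu2, hv2, ← hvv]
      · have huu : u = u⁻¹ := by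
          rw [hu2, hv2, mul_inv] at h3
          field_simp at h3
          have := mul_left_cancel₀ hv (show v * (u * u) = v * 1 by linear_combination v * h3)
          exact eq_inv_of_mul_eq_one_left (by linear_combination this)
        right; rw [hu2, hv2, ← huu]
    · -- u' = u⁻¹, v' = v
      rcases huv with h3 | h3
      · have huu : u = u⁻¹ := by
          rw [hu2, hv2] at h3
          field_simp at h3
          have := mul_left_cancel₀ hv (show v * (u * u) = v * 1 by linear_combination (-v) * h3)
          exact eq_inv_of_mul_eq_one_left (by linear_combination this)
        left; rw [hu2, hv2, ← huu]
      · have hvv : v = v⁻¹ := by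
          rw [hu2, hv2, mul_inv] at h3
          field_simp at h3
          have := mul_left_cancel₀ hu (show u * (v * v) = u * 1 by linear_combination u * h3)
          exact eq_inv_of_mul_eq_one_left (by linear_combination this)
        right; rw [hu2, hv2, ← hvv]
    · right; rw [hu2, hv2]
  · rintro (h | h) <;> obtain ⟨h1, h2⟩ := Prod.mk.injEq _ _ _ _ ▸ h <;>
      intro m n <;> subst h1 <;> subst h2
    · rfl
    · simp only [inv_zpow, ← zpow_neg, neg_neg]
      ring
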